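/- Let V be a nonempty locally compact Hausdorff space and H = ℓ²(ℤ, ℂ). If a ∈ C₀(V, K(H)) satisfies a b = b a for every b ∈ C₀(V, 𝒟), then a ∈ C₀(V, 𝒟). In other words, C₀(V, 𝒟) is maximal abelian in C₀(V, K(H)). -/

import Mathlib

set_option maxHeartbeats 1000000
set_option synthInstance.maxHeartbeats 400000

open scoped ZeroAtInfty

noncomputable section

/-- The Hilbert space `H = ℓ²(ℤ, ℂ)`. -/
abbrev Hsp : Type := lp (fun _ : ℤ => ℂ) 2

/-- The bounded linear operators on `H = ℓ²(ℤ, ℂ)`. -/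
abbrev Op : Type := Hsp →L[ℂ] Hsp

/-- The standard orthonormal basis `(e i)_{i ∈ ℤ}` of `ℓ²(ℤ, ℂ)`. -/
def e (i : ℤ) : Hsp := lp.single 2 i (1 : ℂ)

/-- The set `𝒟` of diagonal compact operators on `ℓ²(ℤ, ℂ)`:
compact operators `T` with `T eᵢ ∈ ℂ eᵢ` for all `i`. -/
def Dset : Set Op := {T | IsCompactOperator T ∧ ∀ i : ℤ, ∃ c : ℂ, T (e i) = c • e i}

variable (M : Type) [TopologicalSpace M]

/-- The subset of `C₀(M, B(H))` consisting of compact-operator valued functions;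
this is `C₀(M, K(H))`. -/
def CK : Set C₀(M, Op) := {a | ∀ p : M, IsCompactOperator (a p)}

/-- The subset of `C₀(M, B(H))` consisting of diagonal compact-operator valued functions;
this is `C₀(M, 𝒟)`. -/
def CD : Set C₀(M, Op) := {b | ∀ p : M, b p ∈ Dset}

/-- Positivity of an element of `C₀(M, B(H))`: all of its values are positive operators. -/
def IsPos (u : C₀(M, Op)) : Prop := ∀ p : M, (u p).IsPositive

/-- `B` is a Cartan subalgebra of `A` (both viewed as subsets of the ambient C*-algebra
`C₀(M, B(H))`): `B` is a closed *-subalgebra of `A` which is (i) commutative, (ii) contains an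
approximate unit of `A`, (iii) is maximal abelian in `A`, (iv) is regular in `A` (the smallest
closed *-subalgebra of `A` containing the normalizer `N_A(B)` is `A` itself), and (v) is the
image of a faithful conditional expectation defined on `A`. -/
def IsCartanSubalgebraIn (A B : Set C₀(M, Op)) : Prop :=
  B ⊆ A ∧ IsClosed B ∧ (0 : C₀(M, Op)) ∈ B ∧
  (∀ x ∈ B, ∀ y ∈ B, x + y ∈ B) ∧
  (∀ (c : ℂ), ∀ x ∈ B, c • x ∈ B) ∧
  (∀ x ∈ B, ∀ y ∈ B, x * y ∈ B) ∧
  (∀ x ∈ B, star x ∈ B) ∧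
  -- (i) commutative
  (∀ x ∈ B, ∀ y ∈ B, x * y = y * x) ∧
  -- (ii) contains an approximate unit of `A`
  (∀ F : Finset C₀(M, Op), ↑F ⊆ A → ∀ ε : ℝ, 0 < ε →
    ∃ u ∈ B, IsPos M u ∧ ‖u‖ ≤ 1 ∧ ∀ a ∈ F, ‖u * a - a‖ < ε ∧ ‖a * u - a‖ < ε) ∧
  -- (iii) maximal abelian in `A`
  (∀ a ∈ A, (∀ b ∈ B, a * b = b * a) → a ∈ B) ∧
  -- (iv) regular in `A`
  closure (↑(NonUnitalStarAlgebra.adjoin ℂ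
      {n : C₀(M, Op) | n ∈ A ∧ (∀ b ∈ B, n * b * star n ∈ B) ∧ ∀ b ∈ B, star n * b * n ∈ B}) :
      Set C₀(M, Op)) = A ∧
  -- (v) faithful conditional expectation from `A` onto `B`
  ∃ E : C₀(M, Op) → C₀(M, Op),
    (∀ a ∈ A, ∀ a' ∈ A, E (a + a') = E a + E a') ∧
    (∀ (c : ℂ), ∀ a ∈ A, E (c • a) = c • E a) ∧
    ContinuousOn E A ∧
    (∀ a ∈ A, ‖E a‖ ≤ ‖a‖) ∧
    (∀ a ∈ A, E a ∈ B) ∧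
    (∀ b ∈ B, E b = b) ∧
    (∀ a ∈ A, IsPos M a → IsPos M (E a)) ∧
    (∀ a ∈ A, E (star a * a) = 0 → a = 0)



lemma norm_e (i : ℤ) : ‖e i‖ = 1 := by
  have := lp.norm_single (p := 2) (E := fun _ : ℤ => ℂ) (by norm_num)
    i (1 : ℂ)
  simpa [e] using this

/-- The rank-one projection onto `ℂ • e i`. -/
def Ti (i : ℤ) : Op := (innerSL ℂ (e i)).smulRight (e i)

lemma Ti_apply (i : ℤ) (x : Hsp) : Ti i x = (inner ℂ (e i) x : ℂ) • e i := rfl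

lemma inner_e (i j : ℤ) : (inner ℂ (e i) (e j) : ℂ) = if j = i then 1 else 0 := by
  rw [e, e, lp.inner_single_left]
  by_cases h : j = i
  · subst h; simp [lp.single_apply]
  · have h' : ¬ i = j := fun hh => h hh.symm
    simp [lp.single_apply, h, h']

lemma Ti_compact (i : ℤ) : IsCompactOperator (Ti i) := by
  refine ⟨(fun c : ℂ => c • e i) '' Metric.closedBall 0 1,
    (isCompact_closedBall 0 1).image (continuous_id.smul continuous_const), ?_⟩
  filter_upwards [Metric.closedBall_mem_nhds (0 : Hsp) one_pos] with x hx
  refine ⟨inner ℂ (e i) x, ?_, rfl⟩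
  rw [Metric.mem_closedBall, dist_zero_right] at hx ⊢
  calc ‖(inner ℂ (e i) x : ℂ)‖ ≤ ‖e i‖ * ‖x‖ := norm_inner_le_norm _ _
    _ ≤ 1 := by rw [norm_e]; simpa using hx

lemma Ti_diag (i j : ℤ) : ∃ c : ℂ, Ti i (e j) = c • e j := by
  refine ⟨if j = i then 1 else 0, ?_⟩
  rw [Ti_apply, inner_e]
  by_cases h : j = i
  · subst h; simp
  · simp [h]

/-- Let `V` be a nonempty locally compact Hausdorff space, `H = ℓ²(ℤ, ℂ)`.
If `a ∈ C₀(V, K(H))` commutes with every element of `C₀(V, 𝒟)`, then `a ∈ C₀(V, 𝒟)`;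
that is, `C₀(V, 𝒟)` is maximal abelian in `C₀(V, K(H))`. -/
theorem cd_maximal_abelian
    (V : Type) [TopologicalSpace V] [LocallyCompactSpace V] [T2Space V] [Nonempty V]
    (a : C₀(V, Op)) (ha : a ∈ CK V)
    (hcomm : ∀ b ∈ CD V, a * b = b * a) :
    a ∈ CD V := by
  intro p
  refine ⟨ha p, fun i => ?_⟩
  obtain ⟨f, hf_supp, hf_nonneg, hf_ne⟩ := exists_continuous_nonneg_pos p
  have hz : Filter.Tendsto (fun v => f v • Ti i) (Filter.cocompact V) (nhds 0) := by
    have h0 : Filter.Tendsto f (Filter.cocompact V) (nhds 0) := hf_supp.is_zero_at_infty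
    have hs : Filter.Tendsto (fun c : ℝ => c • Ti i) (nhds 0) (nhds 0) := by
      have := ((continuous_id.smul (continuous_const (y := Ti i)))).tendsto (0 : ℝ)
      convert this using 2
      · rfl
      · exact (zero_smul ℝ (Ti i)).symm
    exact hs.comp h0
  let b : C₀(V, Op) :=
    { toFun := fun v => f v • Ti i
      continuous_toFun := (map_continuous f).smul continuous_const
      zero_at_infty' := hz }
  have hb : b ∈ CD V := by
    intro v
    refine ⟨(Ti_compact i).smul (f v), fun j => ?_⟩
    obtain ⟨c, hc⟩ := Ti_diag i j
    refine ⟨(f v : ℂ) * c, ?_⟩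
    show f v • Ti i (e j) = _
    rw [hc, mul_smul, Complex.coe_smul]
    rfl
  have key := hcomm b hb
  have hcomm' : a p * Ti i = Ti i * a p := by
    have h := congrArg (fun g : C₀(V, Op) => g p) key
    have h' : f p • (a p * Ti i) = f p • (Ti i * a p) := by
      simpa [b, ZeroAtInftyContinuousMap.mul_apply, mul_smul_comm, smul_mul_assoc] using h
    exact smul_right_injective Op hf_ne h'
  have h1 : Ti i (e i) = e i := by
    rw [Ti_apply, inner_e]; simp
  have h2 : a p (e i) = Ti i (a p (e i)) := by
    conv_lhs => rw [← h1]
    exact congrFun (congrArg (fun T : Op => (T : Hsp → Hsp)) hcomm') (e i)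
  refine ⟨inner ℂ (e i) (a p (e i)), ?_⟩
  conv_lhs => rw [h2, Ti_apply]

end
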